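/- Let k be a field and 𝒫_n the poset consisting of a chain 1 < 2 < ⋯ < n−1 together with two additional incomparable points 1', 1''. The number of isomorphism classes of indecomposable k-linear representations of 𝒫_n equals (1/2)n² + (7/2)n; equivalently, it equals (n²+3n+2) − (n²−n)/2 − 2. -/

import Mathlib

/-- A `k`-linear representation of the poset `𝒫_n = {1 < ⋯ < n−1} ⊔ {1'} ⊔ {1''}`, with
total space `k^d` (every finite-dimensional representation is isomorphic to one of
this form). -/
structure PosetRep (k : Type) [Field k] (n : ℕ) where
  d : ℕ
  chain : Fin (n - 1) → Submodule k (Fin d → k)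
  antitone : ∀ i j : Fin (n - 1), i ≤ j → chain j ≤ chain i
  left : Submodule k (Fin d → k)
  right : Submodule k (Fin d → k)

/-- Isomorphism of representations of `𝒫_n`. -/
def PosetRep.Iso {k : Type} [Field k] {n : ℕ} (R S : PosetRep k n) : Prop :=
  ∃ e : (Fin R.d → k) ≃ₗ[k] (Fin S.d → k),
    (∀ i, (R.chain i).map (e : (Fin R.d → k) →ₗ[k] (Fin S.d → k)) = S.chain i) ∧
    R.left.map (e : (Fin R.d → k) →ₗ[k] (Fin S.d → k)) = S.left ∧
    R.right.map (e : (Fin R.d → k) →ₗ[k] (Fin S.d → k)) = S.right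

/-- Indecomposability: nonzero, and no nontrivial direct sum decomposition compatible
with all distinguished subspaces. -/
def PosetRep.Indec {k : Type} [Field k] {n : ℕ} (R : PosetRep k n) : Prop :=
  R.d ≠ 0 ∧
  ¬ ∃ U U' : Submodule k (Fin R.d → k), U ≠ ⊥ ∧ U' ≠ ⊥ ∧ IsCompl U U' ∧
      (∀ i, R.chain i = (R.chain i ⊓ U) ⊔ (R.chain i ⊓ U')) ∧
      R.left = (R.left ⊓ U) ⊔ (R.left ⊓ U') ∧
      R.right = (R.right ⊓ U) ⊔ (R.right ⊓ U')


open Submodule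

section Helpers
variable {k V : Type*} [Field k] [AddCommGroup V] [Module k V]
theorem compat_left {U U' S : Submodule k V} (hU : U ≤ S) (h : Codisjoint U U') :
    S = (S ⊓ U) ⊔ (S ⊓ U') := by
  rw [inf_eq_right.mpr hU]
  refine le_antisymm ?_ (sup_le hU inf_le_left)
  intro s hs
  have hs' : s ∈ U ⊔ U' := by rw [h.eq_top]; trivial
  obtain ⟨u, hu, w, hw, hsum⟩ := Submodule.mem_sup.mp hs'
  have hwS : w ∈ S := by
    have : w = s - u := by rw [← hsum]; abel
    rw [this]; exact Submodule.sub_mem _ hs (hU hu)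
  rw [← hsum]
  exact Submodule.add_mem_sup hu (Submodule.mem_inf.mpr ⟨hwS, hw⟩)

theorem compat_right {U U' S : Submodule k V} (hS : S ≤ U') :
    S = (S ⊓ U) ⊔ (S ⊓ U') := by
  rw [inf_eq_left.mpr hS]; exact le_antisymm le_sup_right (sup_le inf_le_left le_rfl)

/-- complement containing a given disjoint subspace -/
theorem exists_isCompl_ge {U W : Submodule k V} (h : Disjoint U W) :
    ∃ U' : Submodule k V, W ≤ U' ∧ IsCompl U U' := by
  obtain ⟨C, hC⟩ := Submodule.exists_isCompl (U ⊔ W)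
  refine ⟨W ⊔ C, le_sup_left, ?_, ?_⟩
  · rw [disjoint_iff_inf_le]
    rintro z ⟨hzU, hzWC⟩
    obtain ⟨w, hw, c, hc, hsum⟩ := Submodule.mem_sup.mp hzWC
    have hcUW : c ∈ U ⊔ W := by
      have : c = z - w := by rw [← hsum]; abel
      rw [this]
      exact Submodule.sub_mem _ ((le_sup_left : U ≤ U ⊔ W) hzU) ((le_sup_right : W ≤ U ⊔ W) hw)
    have hc0 : c = 0 := (Submodule.disjoint_def.mp hC.disjoint) c hcUW hc
    have hzw : z = w := by rw [← hsum, hc0, add_zero]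
    have : z = 0 := (Submodule.disjoint_def.mp h) z hzU (hzw ▸ hw)
    simp [this]
  · rw [codisjoint_iff_le_sup]
    calc (⊤ : Submodule k V) = (U ⊔ W) ⊔ C := hC.codisjoint.eq_top.symm
    _ ≤ U ⊔ (W ⊔ C) := by rw [sup_assoc]

/-- dual functional separating a point from a subspace -/
theorem exists_dual_sep {S : Submodule k V} {x : V} (hx : x ∉ S) :
    ∃ f : V →ₗ[k] k, f x = 1 ∧ ∀ y ∈ S, f y = 0 := by
  have hx0 : x ≠ 0 := fun h => hx (h ▸ S.zero_mem)
  have hdisj : Disjoint (span k {x}) S := by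
    rw [disjoint_iff_inf_le]
    rintro z ⟨hz1, hz2⟩
    obtain ⟨c, rfl⟩ := mem_span_singleton.mp hz1
    rcases eq_or_ne c 0 with rfl | hc
    · simp
    · exact absurd (by simpa [smul_smul, inv_mul_cancel₀ hc] using S.smul_mem c⁻¹ hz2) hx
  obtain ⟨U', hSU', hcompl⟩ := exists_isCompl_ge hdisj
  let p := Submodule.linearProjOfIsCompl _ _ hcompl
  let ι := LinearEquiv.toSpanNonzeroSingleton k V x hx0
  refine ⟨ι.symm.toLinearMap ∘ₗ p, ?_, fun y hy => ?_⟩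
  · have h1 : p x = ⟨x, Submodule.mem_span_singleton_self x⟩ :=
      Submodule.linearProjOfIsCompl_apply_left hcompl ⟨x, Submodule.mem_span_singleton_self x⟩
    have h2 : ι 1 = ⟨x, Submodule.mem_span_singleton_self x⟩ := by
      apply Subtype.ext
      simp [ι, LinearEquiv.toSpanNonzeroSingleton]
    simp only [LinearMap.comp_apply, h1, ← h2]
    simp
  · have h3 : p y = 0 := Submodule.linearProjOfIsCompl_apply_right hcompl ⟨y, hSU' hy⟩
    simp [LinearMap.comp_apply, h3]

end Helpers

section Lines
variable {k : Type} [Field k]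

theorem e10_ne : (![1,0] : Fin 2 → k) ≠ 0 := by
  intro h
  have := congrFun h 0
  simp at this

theorem e01_ne : (![0,1] : Fin 2 → k) ≠ 0 := by
  intro h
  have := congrFun h 1
  simp at this

theorem e11_ne : (![1,1] : Fin 2 → k) ≠ 0 := by
  intro h
  have := congrFun h 0
  simp at this

theorem decomp_10_01 (y : Fin 2 → k) : y = y 0 • ![1,0] + y 1 • ![0,1] := by
  funext i
  fin_cases i <;> simp

theorem decomp_10_11 (y : Fin 2 → k) : y = (y 0 - y 1) • ![1,0] + y 1 • ![1,1] := by
  funext i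
  fin_cases i <;> simp

theorem decomp_01_11 (y : Fin 2 → k) : y = (y 1 - y 0) • ![0,1] + y 0 • ![1,1] := by
  funext i
  fin_cases i <;> simp

theorem pair_sup_top {a b : Fin 2 → k} (h : ∀ y : Fin 2 → k, ∃ c d : k, y = c • a + d • b) :
    span k {a} ⊔ span k {b} = ⊤ := by
  rw [eq_top_iff]
  intro y _
  obtain ⟨c, d, rfl⟩ := h y
  exact Submodule.add_mem_sup (Submodule.smul_mem _ c (Submodule.mem_span_singleton_self a))
    (Submodule.smul_mem _ d (Submodule.mem_span_singleton_self b))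

/-- a line compatible with a disjoint pair lies in one part -/
theorem line_le_or {V : Type} [AddCommGroup V] [Module k V] {U U' : Submodule k V} {w : V}
    (hw : w ≠ 0) (hd : Disjoint U U')
    (h : span k {w} = (span k {w} ⊓ U) ⊔ (span k {w} ⊓ U')) :
    span k {w} ≤ U ∨ span k {w} ≤ U' := by
  have hmem : w ∈ (span k {w} ⊓ U) ⊔ (span k {w} ⊓ U') := h ▸ mem_span_singleton_self w
  obtain ⟨a, ⟨ha1, ha2⟩, b, ⟨hb1, hb2⟩, hsum⟩ := Submodule.mem_sup.mp hmem
  obtain ⟨α, rfl⟩ := mem_span_singleton.mp ha1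
  obtain ⟨β, rfl⟩ := mem_span_singleton.mp hb1
  have hαβ : α + β = 1 := by
    by_contra hne
    have : (α + β - 1) • w = 0 := by
      rw [sub_smul, add_smul, hsum, one_smul, sub_self]
    rcases smul_eq_zero.mp this with h0 | h0
    · exact hne (by linear_combination (norm := ring_nf) h0)
    · exact hw h0
  rcases eq_or_ne α 0 with rfl | hα
  · right
    rw [zero_add] at hαβ
    rw [span_singleton_le_iff_mem]
    simpa [hαβ] using hb2
  · left
    rw [span_singleton_le_iff_mem]
    have := U.smul_mem α⁻¹ ha2
    rwa [smul_smul, inv_mul_cancel₀ hα, one_smul] at this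

end Lines

namespace PosetRep
variable {k : Type} [Field k] {n : ℕ}

theorem Iso.refl (R : PosetRep k n) : R.Iso R :=
  ⟨LinearEquiv.refl k _, fun i => by simp, by simp, by simp⟩

theorem map_symm_eq {A B : Type} [AddCommGroup A] [AddCommGroup B] [Module k A] [Module k B]
    (e : A ≃ₗ[k] B) {S : Submodule k A} {T : Submodule k B}
    (h : S.map (e : A →ₗ[k] B) = T) : T.map (e.symm : B →ₗ[k] A) = S := by
  subst h
  ext x
  simp only [Submodule.mem_map]
  constructor
  · rintro ⟨y, ⟨z, hz, rfl⟩, rfl⟩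
    simpa using hz
  · intro hx
    exact ⟨e x, ⟨x, hx, rfl⟩, by simp⟩

theorem Iso.symm {R S : PosetRep k n} (h : R.Iso S) : S.Iso R := by
  obtain ⟨e, hc, hl, hr⟩ := h
  exact ⟨e.symm, fun i => map_symm_eq e (hc i), map_symm_eq e hl, map_symm_eq e hr⟩

theorem Iso.trans {R S T : PosetRep k n} (h1 : R.Iso S) (h2 : S.Iso T) : R.Iso T := by
  obtain ⟨e, hc, hl, hr⟩ := h1
  obtain ⟨f, gc, gl, gr⟩ := h2
  refine ⟨e.trans f, fun i => ?_, ?_, ?_⟩ <;>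
    rw [LinearEquiv.coe_trans, Submodule.map_comp]
  · rw [hc i]; exact gc i
  · rw [hl]; exact gl
  · rw [hr]; exact gr

end PosetRep

section Models
variable (k : Type) [Field k] (n : ℕ)

/-- index type for the classification -/
def PIndex : Type := (Fin n × Bool × Bool) ⊕ {p : Fin n × Fin n // p.1 < p.2}

instance : DecidablePred (fun p : Fin n × Fin n => p.1 < p.2) := fun _ => inferInstanceAs (Decidable _)

instance : Fintype (PIndex n) := inferInstanceAs (Fintype (_ ⊕ _))

def model1 (ℓ : Fin n) (a b : Bool) : PosetRep k n where
  d := 1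
  chain i := if (i : ℕ) < (ℓ : ℕ) then ⊤ else ⊥
  antitone i j hij := by
    have hij' : (i : ℕ) ≤ (j : ℕ) := hij
    split_ifs <;> first | exact le_rfl | exact bot_le | exact le_top | omega
  left := if a then ⊤ else ⊥
  right := if b then ⊤ else ⊥

def model2 (s t : Fin n) : PosetRep k n where
  d := 2
  chain i := if (i : ℕ) < (s : ℕ) then ⊤ else if (i : ℕ) < (t : ℕ) then span k {![1,1]} else ⊥
  antitone i j hij := by
    have hij' : (i : ℕ) ≤ (j : ℕ) := hij
    split_ifs <;> first | exact le_rfl | exact bot_le | exact le_top | omega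
  left := span k {![1,0]}
  right := span k {![0,1]}

def pmodel : PIndex n → PosetRep k n
  | .inl (ℓ, a, b) => model1 k n ℓ a b
  | .inr ⟨(s, t), _⟩ => model2 k n s t

end Models

section FextSec
variable {k : Type} [Field k] {n : ℕ}

def Fext (R : PosetRep k n) (j : ℕ) : Submodule k (Fin R.d → k) :=
  if h : 1 ≤ j ∧ j ≤ n - 1 then R.chain ⟨j - 1, by omega⟩
  else if j = 0 then ⊤ else ⊥

theorem Fext_zero (R : PosetRep k n) : Fext R 0 = ⊤ := by simp [Fext]

theorem Fext_chain (R : PosetRep k n) (i : Fin (n - 1)) : Fext R ((i : ℕ) + 1) = R.chain i := by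
  have hi := i.2
  rw [Fext, dif_pos ⟨by omega, by omega⟩]
  exact congrArg R.chain (Fin.ext (by simp))

theorem Fext_large (R : PosetRep k n) {j : ℕ} (h : n - 1 < j) : Fext R j = ⊥ := by
  rw [Fext, dif_neg (by omega), if_neg (by omega)]

theorem Fext_anti (R : PosetRep k n) {i j : ℕ} (h : i ≤ j) : Fext R j ≤ Fext R i := by
  rcases Nat.eq_zero_or_pos i with rfl | hi
  · rw [Fext_zero]; exact le_top
  rcases le_or_gt j (n-1) with hj | hj
  · rw [Fext, dif_pos ⟨by omega, by omega⟩, Fext, dif_pos ⟨by omega, by omega⟩]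
    exact R.antitone _ _ (by simp only [Fin.mk_le_mk]; omega)
  · rw [Fext_large R hj]; exact bot_le

end FextSec


def ltEquiv (n : ℕ) : {p : Fin n × Fin n // p.1 < p.2} ≃ (Σ t : Fin n, Fin (t : ℕ)) where
  toFun p := ⟨p.1.2, ⟨p.1.1, p.2⟩⟩
  invFun x := ⟨(⟨(x.2 : ℕ), lt_trans x.2.2 x.1.2⟩, x.1), x.2.2⟩
  left_inv p := by
    apply Subtype.ext
    exact Prod.ext (Fin.ext rfl) rfl
  right_inv x := by
    rcases x with ⟨t, s⟩
    rfl

theorem card_lt (n : ℕ) : 2 * Fintype.card {p : Fin n × Fin n // p.1 < p.2} = n * (n - 1) := by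
  rw [Fintype.card_congr (ltEquiv n), Fintype.card_sigma]
  simp only [Fintype.card_fin]
  rw [Fin.sum_univ_eq_sum_range (fun i => i) n, mul_comm]
  exact Finset.sum_range_id_mul_two n

section ModelFacts
variable (k : Type) [Field k] (n : ℕ)

theorem map_top_eq {A B : Type} [AddCommGroup A] [AddCommGroup B] [Module k A] [Module k B]
    (e : A ≃ₗ[k] B) : Submodule.map (e : A →ₗ[k] B) ⊤ = ⊤ := by
  rw [Submodule.map_top, LinearMap.range_eq_top]
  exact e.surjective

theorem map_span_eq {A B : Type} [AddCommGroup A] [AddCommGroup B] [Module k A] [Module k B]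
    (e : A ≃ₗ[k] B) (w : A) :
    Submodule.map (e : A →ₗ[k] B) (span k {w}) = span k {e w} := by
  rw [Submodule.map_span, Set.image_singleton]; rfl

theorem indec1_aux {U U' : Submodule k (Fin 1 → k)} (hU : U ≠ ⊥) (hU' : U' ≠ ⊥)
    (hcompl : IsCompl U U') : False := by
  obtain ⟨u, hu, hu0⟩ := Submodule.ne_bot_iff U |>.mp hU
  obtain ⟨u', hu', hu'0⟩ := Submodule.ne_bot_iff U' |>.mp hU'
  have hu00 : u 0 ≠ 0 := by
    intro h
    apply hu0
    funext i
    rw [Subsingleton.elim i 0, h]; rfl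
  have : u' = (u' 0 * (u 0)⁻¹) • u := by
    funext i
    rw [Subsingleton.elim i 0]
    simp [mul_assoc, inv_mul_cancel₀ hu00]
  have hmem : u' ∈ U := this ▸ U.smul_mem _ hu
  exact hu'0 ((Submodule.disjoint_def.mp hcompl.disjoint) u' hmem hu')

theorem model1_indec (ℓ : Fin n) (a b : Bool) : (model1 k n ℓ a b).Indec := by
  constructor
  · exact one_ne_zero
  · rintro ⟨U, U', hU, hU', hcompl, -, -, -⟩
    exact indec1_aux k hU hU' hcompl

theorem indec2_aux {U U' : Submodule k (Fin 2 → k)} (hU : U ≠ ⊥) (hU' : U' ≠ ⊥)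
    (hcompl : IsCompl U U')
    (hchain : span k {![1,1]} = (span k {![1,1]} ⊓ U) ⊔ (span k {![1,1]} ⊓ U'))
    (hl : span k {![1,0]} = (span k {![1,0]} ⊓ U) ⊔ (span k {![1,0]} ⊓ U'))
    (hr : span k {![0,1]} = (span k {![0,1]} ⊓ U) ⊔ (span k {![0,1]} ⊓ U')) : False := by
    have h3 := line_le_or e11_ne hcompl.disjoint hchain
    have h1 := line_le_or e10_ne hcompl.disjoint hl
    have h2 := line_le_or e01_ne hcompl.disjoint hr
    have key : ∀ (X Y : Submodule k (Fin 2 → k)), Y ≠ ⊥ → Disjoint X Y →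
        ∀ (w1 w2 : Fin 2 → k), (∀ y, ∃ c d : k, y = c • w1 + d • w2) →
        span k {w1} ≤ X → span k {w2} ≤ X → False := by
      intro X Y hY hXY w1 w2 hdec hw1 hw2
      have hXtop : X = ⊤ := by
        rw [eq_top_iff, ← pair_sup_top hdec]
        exact sup_le hw1 hw2
      rw [hXtop] at hXY
      exact hY (disjoint_top.mp hXY.symm)
    have d10 : ∀ y : Fin 2 → k, ∃ c d : k, y = c • ![1,0] + d • ![0,1] :=
      fun y => ⟨y 0, y 1, decomp_10_01 y⟩
    have d11 : ∀ y : Fin 2 → k, ∃ c d : k, y = c • ![1,0] + d • ![1,1] :=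
      fun y => ⟨y 0 - y 1, y 1, decomp_10_11 y⟩
    have d01 : ∀ y : Fin 2 → k, ∃ c d : k, y = c • ![0,1] + d • ![1,1] :=
      fun y => ⟨y 1 - y 0, y 0, decomp_01_11 y⟩
    rcases h1 with h1 | h1 <;> rcases h2 with h2 | h2 <;> rcases h3 with h3 | h3
    · exact key U U' hU' hcompl.disjoint _ _ d10 h1 h2
    · exact key U U' hU' hcompl.disjoint _ _ d10 h1 h2
    · exact key U U' hU' hcompl.disjoint _ _ d11 h1 h3
    · exact key U' U hU hcompl.disjoint.symm _ _ d01 h2 h3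
    · exact key U U' hU' hcompl.disjoint _ _ d01 h2 h3
    · exact key U' U hU hcompl.disjoint.symm _ _ d11 h1 h3
    · exact key U' U hU hcompl.disjoint.symm _ _ d10 h1 h2
    · exact key U' U hU hcompl.disjoint.symm _ _ d10 h1 h2

theorem model2_indec (s t : Fin n) (hst : (s : ℕ) < (t : ℕ)) : (model2 k n s t).Indec := by
  constructor
  · exact two_ne_zero
  · rintro ⟨U, U', hU, hU', hcompl, hc, hl, hr⟩
    have hsn : (s : ℕ) < n - 1 := by have := t.2; omega
    have hchain := hc ⟨(s : ℕ), hsn⟩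
    have hch : (model2 k n s t).chain ⟨(s : ℕ), hsn⟩ = (span k {![1,1]} : Submodule k (Fin 2 → k)) := by
      show (if ((⟨(s:ℕ), hsn⟩ : Fin (n-1)) : ℕ) < (s:ℕ) then ⊤ else
        if ((⟨(s:ℕ), hsn⟩ : Fin (n-1)) : ℕ) < (t:ℕ) then span k {![1,1]} else ⊥) = span k {![1,1]}
      simp [hst]
    rw [hch] at hchain
    exact indec2_aux k hU hU' hcompl hchain hl hr

theorem pmodel_indec (i : PIndex n) : (pmodel k n i).Indec := by
  rcases i with ⟨ℓ, a, b⟩ | ⟨⟨s, t⟩, hst⟩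
  · exact model1_indec k n ℓ a b
  · exact model2_indec k n s t hst

end ModelFacts


section NonIso
variable (k : Type) [Field k] (n : ℕ)

theorem dim_eq_of_equiv {d1 d2 : ℕ} (e : (Fin d1 → k) ≃ₗ[k] (Fin d2 → k)) : d1 = d2 := by
  have := e.finrank_eq
  rwa [Module.finrank_fin_fun, Module.finrank_fin_fun] at this

theorem top_ne_span2 (w : Fin 2 → k) (hw : w ≠ 0) : (⊤ : Submodule k (Fin 2 → k)) ≠ span k {w} := by
  intro h
  have h1 : Module.finrank k (⊤ : Submodule k (Fin 2 → k)) = 2 := by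
    rw [finrank_top, Module.finrank_fin_fun]
  rw [h, finrank_span_singleton hw] at h1
  omega

theorem noniso11 {ℓ ℓ' : Fin n} {a b a' b' : Bool} (e : (Fin 1 → k) ≃ₗ[k] (Fin 1 → k))
    (hc : ∀ i : Fin (n-1), Submodule.map (e : (Fin 1 → k) →ₗ[k] (Fin 1 → k))
      (if (i:ℕ) < (ℓ:ℕ) then ⊤ else ⊥) = (if (i:ℕ) < (ℓ':ℕ) then ⊤ else ⊥))
    (hl : Submodule.map (e : (Fin 1 → k) →ₗ[k] (Fin 1 → k))
      (if a then ⊤ else ⊥) = (if a' then ⊤ else ⊥))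
    (hr : Submodule.map (e : (Fin 1 → k) →ₗ[k] (Fin 1 → k))
      (if b then ⊤ else ⊥) = (if b' then ⊤ else ⊥)) :
    ℓ = ℓ' ∧ a = a' ∧ b = b' := by
  have hmt : Submodule.map (e : (Fin 1 → k) →ₗ[k] (Fin 1 → k)) ⊤ = ⊤ := map_top_eq k e
  have hmb : Submodule.map (e : (Fin 1 → k) →ₗ[k] (Fin 1 → k)) ⊥ = ⊥ := Submodule.map_bot _
  have htb : (⊤ : Submodule k (Fin 1 → k)) ≠ ⊥ := top_ne_bot
  have hiff : ∀ i : ℕ, i < n - 1 → ((i < (ℓ:ℕ)) ↔ (i < (ℓ':ℕ))) := by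
    intro i hi
    have key := hc ⟨i, hi⟩
    simp only [Fin.val_mk] at key
    constructor <;> intro hlt <;> by_contra hlt'
    · rw [if_pos hlt, if_neg hlt', hmt] at key
      exact htb key
    · rw [if_neg hlt', if_pos hlt, hmb] at key
      exact htb key.symm
  refine ⟨?_, ?_, ?_⟩
  · have h2 := ℓ.2
    have h2' := ℓ'.2
    apply Fin.ext
    by_contra hne
    rcases Nat.lt_or_ge (ℓ : ℕ) (ℓ' : ℕ) with hlt | hge
    · have := hiff (ℓ : ℕ) (by omega); omega
    · have := hiff (ℓ' : ℕ) (by omega); omega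
  · rcases ha : a <;> rcases ha' : a' <;> rw [ha, ha'] at hl <;>
      simp only [Bool.false_eq_true, if_true, if_false, hmt, hmb] at hl <;>
      first | rfl | exact absurd hl htb | exact absurd hl.symm htb
  · rcases hb : b <;> rcases hb' : b' <;> rw [hb, hb'] at hr <;>
      simp only [Bool.false_eq_true, if_true, if_false, hmt, hmb] at hr <;>
      first | rfl | exact absurd hr htb | exact absurd hr.symm htb

theorem noniso22 {s t s' t' : Fin n} (hst : (s:ℕ) < (t:ℕ)) (hst' : (s':ℕ) < (t':ℕ))
    (e : (Fin 2 → k) ≃ₗ[k] (Fin 2 → k))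
    (hc : ∀ i : Fin (n-1), Submodule.map (e : (Fin 2 → k) →ₗ[k] (Fin 2 → k))
      (if (i:ℕ) < (s:ℕ) then ⊤ else if (i:ℕ) < (t:ℕ) then span k {![1,1]} else ⊥)
      = (if (i:ℕ) < (s':ℕ) then ⊤ else if (i:ℕ) < (t':ℕ) then span k {![1,1]} else ⊥)) :
    s = s' ∧ t = t' := by
  have hmt : Submodule.map (e : (Fin 2 → k) →ₗ[k] (Fin 2 → k)) ⊤ = ⊤ := map_top_eq k e
  have hmb : Submodule.map (e : (Fin 2 → k) →ₗ[k] (Fin 2 → k)) ⊥ = ⊥ := Submodule.map_bot _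
  have hml : Submodule.map (e : (Fin 2 → k) →ₗ[k] (Fin 2 → k)) (span k {![1,1]})
      = span k {e ![1,1]} := map_span_eq k e _
  have he11 : e ![1,1] ≠ 0 := fun h0 => e11_ne (e.map_eq_zero_iff.mp h0)
  have hA : (⊤ : Submodule k (Fin 2 → k)) ≠ span k {![1,1]} := top_ne_span2 k _ e11_ne
  have hB : (⊤ : Submodule k (Fin 2 → k)) ≠ ⊥ := top_ne_bot
  have hC : span k {e ![1,1]} ≠ ⊤ := fun h0 => (top_ne_span2 k _ he11) h0.symm
  have hD : span k {e ![1,1]} ≠ ⊥ := fun h0 => he11 (span_singleton_eq_bot.mp h0)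
  have hE : (⊥ : Submodule k (Fin 2 → k)) ≠ ⊤ := fun h0 => hB h0.symm
  have hF : (⊥ : Submodule k (Fin 2 → k)) ≠ span k {![1,1]} :=
    fun h0 => e11_ne (span_singleton_eq_bot.mp h0.symm)
  have hiff : ∀ i : ℕ, i < n - 1 →
      (((i < (s:ℕ)) ↔ (i < (s':ℕ))) ∧ ((i < (t:ℕ)) ↔ (i < (t':ℕ)))) := by
    intro i hi
    have hcc := hc ⟨i, hi⟩
    simp only [Fin.val_mk] at hcc
    split_ifs at hcc <;>
      simp only [hmt, hmb, hml] at hcc <;>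
      first
        | (constructor <;> constructor <;> intro <;> omega)
        | exact absurd hcc hA | exact absurd hcc hB | exact absurd hcc hC
        | exact absurd hcc hD | exact absurd hcc hE | exact absurd hcc hF
  have hs2 := s.2
  have ht2 := t.2
  have hs2' := s'.2
  have ht2' := t'.2
  constructor
  · apply Fin.ext
    by_contra hne
    rcases Nat.lt_or_ge (s : ℕ) (s' : ℕ) with hlt | hge
    · have := (hiff (s : ℕ) (by omega)).1; omega
    · have := (hiff (s' : ℕ) (by omega)).1; omega
  · apply Fin.ext
    by_contra hne
    rcases Nat.lt_or_ge (t : ℕ) (t' : ℕ) with hlt | hge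
    · have := (hiff (t : ℕ) (by omega)).2; omega
    · have := (hiff (t' : ℕ) (by omega)).2; omega

theorem pmodel_inj (i j : PIndex n) (h : (pmodel k n i).Iso (pmodel k n j)) : i = j := by
  rcases i with ⟨ℓ, a, b⟩ | ⟨⟨s, t⟩, hst⟩ <;> rcases j with ⟨ℓ', a', b'⟩ | ⟨⟨s', t'⟩, hst'⟩
  · obtain ⟨e, hc, hl, hr⟩ := h
    obtain ⟨h1, h2, h3⟩ := noniso11 k n e hc hl hr
    exact congrArg Sum.inl (by rw [h1, h2, h3])
  · obtain ⟨e, -, -, -⟩ := h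
    exact absurd (dim_eq_of_equiv k (d1 := 1) (d2 := 2) e) (by omega)
  · obtain ⟨e, -, -, -⟩ := h
    exact absurd (dim_eq_of_equiv k (d1 := 2) (d2 := 1) e) (by omega)
  · obtain ⟨e, hc, -, -⟩ := h
    obtain ⟨h1, h2⟩ := noniso22 k n hst hst' e hc
    exact congrArg Sum.inr (Subtype.ext (Prod.ext h1 h2))

end NonIso


section IsoHelpers
variable {k : Type} [Field k] {n : ℕ}

theorem iso1 {R : PosetRep k n} (x : Fin R.d → k) (hx : x ≠ 0) (hsp : span k {x} = ⊤)
    (ℓ : Fin n) (a b : Bool)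
    (hchain : ∀ i : Fin (n-1), R.chain i = (if (i:ℕ) < (ℓ:ℕ) then ⊤ else ⊥))
    (hleft : R.left = (if a then ⊤ else ⊥)) (hright : R.right = (if b then ⊤ else ⊥)) :
    (pmodel k n (Sum.inl (ℓ, a, b))).Iso R := by
  let e : (Fin 1 → k) ≃ₗ[k] (Fin R.d → k) :=
    (LinearEquiv.funUnique (Fin 1) k k).trans
      ((LinearEquiv.toSpanNonzeroSingleton k _ x hx).trans
        ((LinearEquiv.ofEq _ _ hsp).trans Submodule.topEquiv))
  refine ⟨e, fun i => ?_, ?_, ?_⟩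
  · show Submodule.map (e : (Fin 1 → k) →ₗ[k] (Fin R.d → k))
      (if (i:ℕ) < (ℓ:ℕ) then ⊤ else ⊥) = R.chain i
    rw [hchain i]
    split_ifs
    · exact map_top_eq k e
    · exact Submodule.map_bot _
  · show Submodule.map (e : (Fin 1 → k) →ₗ[k] (Fin R.d → k))
      (if a then ⊤ else ⊥) = R.left
    rw [hleft]
    split_ifs
    · exact map_top_eq k e
    · exact Submodule.map_bot _
  · show Submodule.map (e : (Fin 1 → k) →ₗ[k] (Fin R.d → k))
      (if b then ⊤ else ⊥) = R.right
    rw [hright]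
    split_ifs
    · exact map_top_eq k e
    · exact Submodule.map_bot _

theorem iso2 {R : PosetRep k n} (u v : Fin R.d → k) (f g : (Fin R.d → k) →ₗ[k] k)
    (hfu : f u = 1) (hfv : f v = 0) (hgu : g u = 0) (hgv : g v = 1)
    (hdual : ∀ y, y = f y • u + g y • v)
    (s t : Fin n) (hst : (s:ℕ) < (t:ℕ))
    (hchain : ∀ i : Fin (n-1), R.chain i =
      (if (i:ℕ) < (s:ℕ) then ⊤ else if (i:ℕ) < (t:ℕ) then span k {u + v} else ⊥))
    (hleft : R.left = span k {u}) (hright : R.right = span k {v}) :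
    (pmodel k n (Sum.inr ⟨(s,t), hst⟩)).Iso R := by
  let φ : (Fin 2 → k) →ₗ[k] (Fin R.d → k) :=
    { toFun := fun c => c 0 • u + c 1 • v
      map_add' := by
        intro c c'
        simp only [Pi.add_apply, add_smul]
        abel
      map_smul' := by
        intro r c
        simp only [Pi.smul_apply, smul_eq_mul, RingHom.id_apply, smul_add, smul_smul] }
  let ψ : (Fin R.d → k) →ₗ[k] (Fin 2 → k) :=
    { toFun := fun y => ![f y, g y]
      map_add' := by
        intro y y'
        funext i
        fin_cases i <;> simp
      map_smul' := by
        intro r y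
        funext i
        fin_cases i <;> simp }
  have hφ : ∀ c : Fin 2 → k, φ c = c 0 • u + c 1 • v := fun _ => rfl
  have hψ : ∀ y, ψ y = ![f y, g y] := fun _ => rfl
  let e : (Fin 2 → k) ≃ₗ[k] (Fin R.d → k) := LinearEquiv.ofLinear φ ψ
    (by
      apply LinearMap.ext
      intro y
      simp only [LinearMap.comp_apply, LinearMap.id_apply, hψ, hφ]
      rw [Matrix.cons_val_zero, Matrix.cons_val_one, Matrix.cons_val_zero]
      exact (hdual y).symm)
    (by
      apply LinearMap.ext
      intro c
      simp only [LinearMap.comp_apply, LinearMap.id_apply, hφ, hψ, map_add, map_smul,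
        hfu, hfv, hgu, hgv, smul_eq_mul, mul_one, mul_zero, add_zero, zero_add]
      funext i
      fin_cases i <;> simp)
  have hecoe : ∀ c : Fin 2 → k, e c = φ c := fun _ => rfl
  have he10 : e ![1,0] = u := by
    rw [hecoe, hφ]
    simp
  have he01 : e ![0,1] = v := by
    rw [hecoe, hφ]
    simp
  have he11 : e ![1,1] = u + v := by
    rw [hecoe, hφ]
    simp
  refine ⟨e, fun i => ?_, ?_, ?_⟩
  · show Submodule.map (e : (Fin 2 → k) →ₗ[k] (Fin R.d → k))
      (if (i:ℕ) < (s:ℕ) then ⊤ else if (i:ℕ) < (t:ℕ) then span k {![1,1]} else ⊥) = R.chain i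
    rw [hchain i]
    split_ifs
    · exact map_top_eq k e
    · rw [map_span_eq k e, he11]
    · exact Submodule.map_bot _
  · show Submodule.map (e : (Fin 2 → k) →ₗ[k] (Fin R.d → k)) (span k {![1,0]}) = R.left
    rw [hleft, map_span_eq k e, he10]
  · show Submodule.map (e : (Fin 2 → k) →ₗ[k] (Fin R.d → k)) (span k {![0,1]}) = R.right
    rw [hright, map_span_eq k e, he01]

end IsoHelpers


section Classification
variable {k : Type} [Field k] {n : ℕ}

open Classical in
theorem classify (hn : 1 ≤ n) (R : PosetRep k n) (hR : R.Indec) :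
    ∃ i : PIndex n, (pmodel k n i).Iso R := by
  classical
  have hd : R.d ≠ 0 := hR.1
  haveI : Nonempty (Fin R.d) := ⟨⟨0, Nat.pos_of_ne_zero hd⟩⟩
  haveI : Nontrivial (Fin R.d → k) := inferInstance
  set m : ℕ := Nat.findGreatest (fun j => Fext R j ≠ ⊥) (n-1) with hm_def
  have hm_le : m ≤ n - 1 := Nat.findGreatest_le _
  have hmn : m < n := by omega
  have hmB : Fext R m ≠ ⊥ :=
    Nat.findGreatest_spec (P := fun j => Fext R j ≠ ⊥) (Nat.zero_le _) (by show Fext R 0 ≠ ⊥; rw [Fext_zero]; exact top_ne_bot)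
  have hgt : ∀ j, m < j → Fext R j = ⊥ := by
    intro j hj
    rcases le_or_gt j (n-1) with hle | hlt
    · by_contra hne
      exact (Nat.findGreatest_is_greatest hj hle) hne
    · exact Fext_large R hlt
  have hchainF : ∀ i : Fin (n-1), R.chain i = Fext R ((i:ℕ)+1) :=
    fun i => (Fext_chain R i).symm
  -- endgame: any compatible splitting must be trivial
  have endg : ∀ U U' : Submodule k (Fin R.d → k), U ≠ ⊥ → IsCompl U U' →
      (∀ i, R.chain i = (R.chain i ⊓ U) ⊔ (R.chain i ⊓ U')) →
      (R.left = (R.left ⊓ U) ⊔ (R.left ⊓ U')) →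
      (R.right = (R.right ⊓ U) ⊔ (R.right ⊓ U')) → U = ⊤ ∧ U' = ⊥ := by
    intro U U' hU hcompl hcc hll hrr
    have hU' : U' = ⊥ := by
      by_contra hne
      exact hR.2 ⟨U, U', hU, hne, hcompl, hcc, hll, hrr⟩
    refine ⟨?_, hU'⟩
    have := hcompl.sup_eq_top
    rwa [hU', sup_bot_eq] at this
  -- chain compatibility for the 1-dimensional cases
  have chaincompat : ∀ (x : Fin R.d → k), x ∈ Fext R m → ∀ (U' : Submodule k (Fin R.d → k)),
      Codisjoint (span k {x}) U' →
      ∀ i : Fin (n-1), R.chain i = (R.chain i ⊓ span k {x}) ⊔ (R.chain i ⊓ U') := by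
    intro x hx U' hcod i
    rcases le_or_gt ((i:ℕ)+1) m with hle | hlt
    · refine compat_left ?_ hcod
      rw [hchainF i]
      rw [span_le, Set.singleton_subset_iff]
      exact Fext_anti R hle hx
    · rw [hchainF i, hgt _ hlt]
      simp
  -- chain pattern at the end, 1-dimensional case
  have chainpat : ∀ (x : Fin R.d → k), x ∈ Fext R m → span k {x} = ⊤ →
      ∀ i : Fin (n-1), R.chain i = (if (i:ℕ) < ((⟨m, hmn⟩ : Fin n):ℕ) then ⊤ else ⊥) := by
    intro x hx hsp i
    show R.chain i = (if (i:ℕ) < m then ⊤ else ⊥)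
    rcases lt_or_ge (i:ℕ) m with hlt | hge
    · rw [if_pos hlt, hchainF i, eq_top_iff, ← hsp, span_le, Set.singleton_subset_iff]
      exact Fext_anti R (by omega) hx
    · rw [if_neg (by omega), hchainF i]
      exact hgt _ (by omega)
  by_cases hA : Fext R m ⊓ (R.left ⊓ R.right) ≠ ⊥
  · -- case A : x in everything
    obtain ⟨x, hx, hx0⟩ := (Submodule.ne_bot_iff _).mp hA
    obtain ⟨hxB, hxL, hxR⟩ : x ∈ Fext R m ∧ x ∈ R.left ∧ x ∈ R.right := by
      rcases Submodule.mem_inf.mp hx with ⟨h1, h2⟩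
      exact ⟨h1, Submodule.mem_inf.mp h2⟩
    obtain ⟨U', hcompl⟩ := Submodule.exists_isCompl (span k {x})
    have hspx : span k {x} ≠ ⊥ := fun h => hx0 (span_singleton_eq_bot.mp h)
    have hxLs : span k {x} ≤ R.left := by rwa [span_le, Set.singleton_subset_iff]
    have hxRs : span k {x} ≤ R.right := by rwa [span_le, Set.singleton_subset_iff]
    obtain ⟨hTop, hBot⟩ := endg _ _ hspx hcompl (chaincompat x hxB U' hcompl.codisjoint)
      (compat_left hxLs hcompl.codisjoint) (compat_left hxRs hcompl.codisjoint)
    refine ⟨Sum.inl (⟨m, hmn⟩, true, true), iso1 x hx0 hTop _ _ _ (chainpat x hxB hTop) ?_ ?_⟩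
    · rw [if_pos rfl, eq_top_iff, ← hTop]
      exact hxLs
    · rw [if_pos rfl, eq_top_iff, ← hTop]
      exact hxRs
  · push_neg at hA
    by_cases hB : Fext R m ⊓ R.left ≠ ⊥
    · -- case B : x in B and left, not right
      obtain ⟨x, hx, hx0⟩ := (Submodule.ne_bot_iff _).mp hB
      obtain ⟨hxB, hxL⟩ := Submodule.mem_inf.mp hx
      have hxnR : x ∉ R.right := by
        intro hxR
        exact hx0 (by
          have : x ∈ Fext R m ⊓ (R.left ⊓ R.right) :=
            Submodule.mem_inf.mpr ⟨hxB, Submodule.mem_inf.mpr ⟨hxL, hxR⟩⟩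
          rwa [hA, Submodule.mem_bot] at this)
      have hdisj : Disjoint (span k {x}) R.right := by
        rw [disjoint_iff_inf_le]
        rintro z ⟨hz1, hz2⟩
        obtain ⟨c, rfl⟩ := mem_span_singleton.mp hz1
        rcases eq_or_ne c 0 with rfl | hc
        · simp
        · exact absurd (by simpa [smul_smul, inv_mul_cancel₀ hc] using R.right.smul_mem c⁻¹ hz2) hxnR
      obtain ⟨U', hRU', hcompl⟩ := exists_isCompl_ge hdisj
      have hspx : span k {x} ≠ ⊥ := fun h => hx0 (span_singleton_eq_bot.mp h)
      have hxLs : span k {x} ≤ R.left := by rwa [span_le, Set.singleton_subset_iff]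
      obtain ⟨hTop, hBot⟩ := endg _ _ hspx hcompl (chaincompat x hxB U' hcompl.codisjoint)
        (compat_left hxLs hcompl.codisjoint) (compat_right hRU')
      refine ⟨Sum.inl (⟨m, hmn⟩, true, false), iso1 x hx0 hTop _ _ _ (chainpat x hxB hTop) ?_ ?_⟩
      · rw [if_pos rfl, eq_top_iff, ← hTop]
        exact hxLs
      · rw [if_neg (by simp), ← le_bot_iff, ← hBot]
        exact hRU'
    · push_neg at hB
      by_cases hB' : Fext R m ⊓ R.right ≠ ⊥
      · -- case B' : x in B and right, not left
        obtain ⟨x, hx, hx0⟩ := (Submodule.ne_bot_iff _).mp hB'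
        obtain ⟨hxB, hxR⟩ := Submodule.mem_inf.mp hx
        have hxnL : x ∉ R.left := by
          intro hxL
          exact hx0 (by
            have : x ∈ Fext R m ⊓ R.left := Submodule.mem_inf.mpr ⟨hxB, hxL⟩
            rwa [hB, Submodule.mem_bot] at this)
        have hdisj : Disjoint (span k {x}) R.left := by
          rw [disjoint_iff_inf_le]
          rintro z ⟨hz1, hz2⟩
          obtain ⟨c, rfl⟩ := mem_span_singleton.mp hz1
          rcases eq_or_ne c 0 with rfl | hc
          · simp
          · exact absurd (by simpa [smul_smul, inv_mul_cancel₀ hc] using R.left.smul_mem c⁻¹ hz2) hxnL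
        obtain ⟨U', hLU', hcompl⟩ := exists_isCompl_ge hdisj
        have hspx : span k {x} ≠ ⊥ := fun h => hx0 (span_singleton_eq_bot.mp h)
        have hxRs : span k {x} ≤ R.right := by rwa [span_le, Set.singleton_subset_iff]
        obtain ⟨hTop, hBot⟩ := endg _ _ hspx hcompl (chaincompat x hxB U' hcompl.codisjoint)
          (compat_right hLU') (compat_left hxRs hcompl.codisjoint)
        refine ⟨Sum.inl (⟨m, hmn⟩, false, true), iso1 x hx0 hTop _ _ _ (chainpat x hxB hTop) ?_ ?_⟩
        · rw [if_neg (by simp), ← le_bot_iff, ← hBot]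
          exact hLU'
        · rw [if_pos rfl, eq_top_iff, ← hTop]
          exact hxRs
      · push_neg at hB'
        by_cases hC : Fext R m ⊓ (R.left ⊔ R.right) ≠ ⊥
        · -- case C2 : the two-dimensional case
          obtain ⟨x0, hx0mem, hx00⟩ := (Submodule.ne_bot_iff _).mp hC
          obtain ⟨hx0B, hx0LR⟩ := Submodule.mem_inf.mp hx0mem
          have hP0 : (fun j => ∃ u v, u ∈ R.left ∧ v ∈ R.right ∧
              u + v ∈ Fext R m ∧ u + v ≠ 0 ∧ u ∈ Fext R j ∧ v ∈ Fext R j) 0 := by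
            obtain ⟨u, hu, v, hv, huv⟩ := Submodule.mem_sup.mp hx0LR
            exact ⟨u, v, hu, hv, by rw [huv]; exact hx0B, by rw [huv]; exact hx00,
              by rw [Fext_zero]; trivial, by rw [Fext_zero]; trivial⟩
          set s : ℕ := Nat.findGreatest (fun j => ∃ u v, u ∈ R.left ∧ v ∈ R.right ∧
              u + v ∈ Fext R m ∧ u + v ≠ 0 ∧ u ∈ Fext R j ∧ v ∈ Fext R j) (n-1) with hs_def
          have hs_le : s ≤ n - 1 := Nat.findGreatest_le _
          obtain ⟨u, v, huL, hvR, hxB, hxne, huF, hvF⟩ :=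
            Nat.findGreatest_spec (P := fun j => ∃ u v, u ∈ R.left ∧ v ∈ R.right ∧
              u + v ∈ Fext R m ∧ u + v ≠ 0 ∧ u ∈ Fext R j ∧ v ∈ Fext R j)
              (Nat.zero_le _) hP0
          set x := u + v with hx_def
          have hu0 : u ≠ 0 := by
            intro h0
            apply hxne
            have hxR : x ∈ R.right := by rw [hx_def, h0, zero_add]; exact hvR
            have : x ∈ Fext R m ⊓ R.right := Submodule.mem_inf.mpr ⟨hxB, hxR⟩
            rwa [hB', Submodule.mem_bot] at this
          have hv0 : v ≠ 0 := by
            intro h0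
            apply hxne
            have hxL : x ∈ R.left := by rw [hx_def, h0, add_zero]; exact huL
            have : x ∈ Fext R m ⊓ R.left := Submodule.mem_inf.mpr ⟨hxB, hxL⟩
            rwa [hB, Submodule.mem_bot] at this
          have hsm : s < m := by
            by_contra hge
            push_neg at hge
            have huB : u ∈ Fext R m := Fext_anti R hge huF
            have : u ∈ Fext R m ⊓ R.left := Submodule.mem_inf.mpr ⟨huB, huL⟩
            rw [hB, Submodule.mem_bot] at this
            exact hu0 this
          have hnotP : ¬ (fun j => ∃ u v, u ∈ R.left ∧ v ∈ R.right ∧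
              u + v ∈ Fext R m ∧ u + v ≠ 0 ∧ u ∈ Fext R j ∧ v ∈ Fext R j) (s+1) :=
            Nat.findGreatest_is_greatest (k := s+1) (by rw [← hs_def]; omega) (by omega)
          have hxP : x ∈ Fext R (s+1) := Fext_anti R (by omega) hxB
          have hxQ : x ∉ (R.left ⊓ Fext R (s+1)) ⊔ (R.right ⊓ Fext R (s+1)) := by
            intro hmem
            obtain ⟨l, hl, r, hr, hsum⟩ := Submodule.mem_sup.mp hmem
            obtain ⟨hlL, hlP⟩ := Submodule.mem_inf.mp hl
            obtain ⟨hrR, hrP⟩ := Submodule.mem_inf.mp hr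
            exact hnotP ⟨l, r, hlL, hrR, by rw [hsum]; exact hxB, by rw [hsum]; exact hxne,
              hlP, hrP⟩
          obtain ⟨h, hhx, hhQ⟩ := exists_dual_sep hxQ
          -- generic construction of the functional
          have buildf : ∀ (R' : Submodule k (Fin R.d → k)) (u' v' : Fin R.d → k),
              v' ∈ R' → u' + v' = x → (∀ y ∈ R' ⊓ Fext R (s+1), h y = 0) →
              ∃ f : (Fin R.d → k) →ₗ[k] k, f x = 1 ∧ (∀ y ∈ R', f y = 0) ∧
                (∀ y ∈ Fext R (s+1) ⊓ LinearMap.ker h, f y = 0) ∧ f u' = 1 := by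
            intro R' u' v' hv'R hsum hQR
            have hxN : x ∉ R' ⊔ (Fext R (s+1) ⊓ LinearMap.ker h) := by
              intro hmem
              obtain ⟨r, hr, p, hp, hsum2⟩ := Submodule.mem_sup.mp hmem
              obtain ⟨hpP, hph⟩ := Submodule.mem_inf.mp hp
              have hrP : r ∈ Fext R (s+1) := by
                have heq : r = x - p := by rw [← hsum2]; abel
                rw [heq]; exact Submodule.sub_mem _ hxP hpP
              have hhr : h r = 0 := hQR r (Submodule.mem_inf.mpr ⟨hr, hrP⟩)
              have hh0 : h x = 0 := by
                rw [← hsum2, map_add, hhr, LinearMap.mem_ker.mp hph, add_zero]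
              rw [hhx] at hh0
              exact one_ne_zero hh0
            by_cases hu'mem : u' ∈ Fext R (s+1) ⊔ R'
            · obtain ⟨f, hfx, hfN⟩ := exists_dual_sep hxN
              have hfP : ∀ p ∈ Fext R (s+1), f p = h p := by
                intro p hp
                have hker : p - h p • x ∈ Fext R (s+1) ⊓ LinearMap.ker h :=
                  Submodule.mem_inf.mpr ⟨Submodule.sub_mem _ hp (Submodule.smul_mem _ _ hxP),
                    LinearMap.mem_ker.mpr
                      (by rw [map_sub, map_smul, hhx, smul_eq_mul, mul_one, sub_self])⟩
                have h0 : f (p - h p • x) = 0 := hfN _ (Submodule.mem_sup_right hker)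
                rwa [map_sub, map_smul, hfx, smul_eq_mul, mul_one, sub_eq_zero] at h0
              refine ⟨f, hfx, fun y hy => hfN y (Submodule.mem_sup_left hy),
                fun y hy => hfN y (Submodule.mem_sup_right hy), ?_⟩
              obtain ⟨p, hp, r, hr, hsum2⟩ := Submodule.mem_sup.mp hu'mem
              have hrv : r + v' ∈ R' := Submodule.add_mem _ hr hv'R
              have hrvP : r + v' ∈ Fext R (s+1) := by
                have heq : r + v' = x - p := by rw [← hsum, ← hsum2]; abel
                rw [heq]; exact Submodule.sub_mem _ hxP hp
              have hhrv : h (r + v') = 0 := hQR _ (Submodule.mem_inf.mpr ⟨hrv, hrvP⟩)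
              have hfu' : f u' = f p := by
                rw [← hsum2, map_add, hfN r (Submodule.mem_sup_left hr), add_zero]
              rw [hfu', hfP p hp]
              have heq2 : h p = h x - h (r + v') := by
                have hxeq : x = p + (r + v') := by rw [← hsum, ← hsum2]; abel
                rw [hxeq, map_add]
                ring
              rw [heq2, hhx, hhrv, sub_zero]
            · have hxN2 : x ∉ (R' ⊔ (Fext R (s+1) ⊓ LinearMap.ker h)) ⊔ span k {u' - x} := by
                intro hmem
                obtain ⟨w, hw, z, hz, hsum2⟩ := Submodule.mem_sup.mp hmem
                obtain ⟨c, rfl⟩ := mem_span_singleton.mp hz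
                rcases eq_or_ne c 0 with rfl | hc
                · rw [zero_smul, add_zero] at hsum2
                  exact hxN (hsum2 ▸ hw)
                · apply hu'mem
                  have hw' : w ∈ Fext R (s+1) ⊔ R' := by
                    have hle : R' ⊔ (Fext R (s+1) ⊓ LinearMap.ker h) ≤ Fext R (s+1) ⊔ R' :=
                      sup_le le_sup_right (le_trans inf_le_left le_sup_left)
                    exact hle hw
                  have hxw : x - w ∈ Fext R (s+1) ⊔ R' :=
                    Submodule.sub_mem _ (Submodule.mem_sup_left hxP) hw'
                  have hu'eq : u' = c⁻¹ • (x - w) + x := by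
                    have h1 : c • (u' - x) = x - w := by rw [eq_sub_iff_add_eq, add_comm]; exact hsum2
                    calc u' = c⁻¹ • (c • (u' - x)) + x := by
                          rw [smul_smul, inv_mul_cancel₀ hc, one_smul]; abel
                    _ = c⁻¹ • (x - w) + x := by rw [h1]
                  rw [hu'eq]
                  exact Submodule.add_mem _ (Submodule.smul_mem _ _ hxw)
                    (Submodule.mem_sup_left hxP)
              obtain ⟨f, hfx, hfN⟩ := exists_dual_sep hxN2
              refine ⟨f, hfx,
                fun y hy => hfN y (Submodule.mem_sup_left (Submodule.mem_sup_left hy)),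
                fun y hy => hfN y (Submodule.mem_sup_left (Submodule.mem_sup_right hy)), ?_⟩
              have h0 : f (u' - x) = 0 :=
                hfN _ (Submodule.mem_sup_right (Submodule.mem_span_singleton_self _))
              rwa [map_sub, hfx, sub_eq_zero] at h0
          obtain ⟨f, hfx, hfR, hfker, hfu⟩ := buildf R.right u v hvR hx_def.symm
            (fun y hy => hhQ y (Submodule.mem_sup_right hy))
          obtain ⟨g, hgx, hgL, hgker, hgv⟩ := buildf R.left v u huL
            (by rw [hx_def]; exact add_comm v u) (fun y hy => hhQ y (Submodule.mem_sup_left hy))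
          have agreeP : ∀ (f' : (Fin R.d → k) →ₗ[k] k), f' x = 1 →
              (∀ y ∈ Fext R (s+1) ⊓ LinearMap.ker h, f' y = 0) →
              ∀ p ∈ Fext R (s+1), f' p = h p := by
            intro f' hf'x hf'ker p hp
            have hker : p - h p • x ∈ Fext R (s+1) ⊓ LinearMap.ker h :=
              Submodule.mem_inf.mpr ⟨Submodule.sub_mem _ hp (Submodule.smul_mem _ _ hxP),
                LinearMap.mem_ker.mpr
                  (by rw [map_sub, map_smul, hhx, smul_eq_mul, mul_one, sub_self])⟩
            have h0 : f' (p - h p • x) = 0 := hf'ker _ hker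
            rwa [map_sub, map_smul, hf'x, smul_eq_mul, mul_one, sub_eq_zero] at h0
          have hfP : ∀ p ∈ Fext R (s+1), f p = h p := agreeP f hfx hfker
          have hgP : ∀ p ∈ Fext R (s+1), g p = h p := agreeP g hgx hgker
          have hfv : f v = 0 := hfR v hvR
          have hgu : g u = 0 := hgL u huL
          set U : Submodule k (Fin R.d → k) := span k {u, v} with hU_def
          set U' : Submodule k (Fin R.d → k) := LinearMap.ker f ⊓ LinearMap.ker g with hU'_def
          have huU : u ∈ U := Submodule.subset_span (Set.mem_insert u {v})
          have hvU : v ∈ U := Submodule.subset_span (Set.mem_insert_of_mem u rfl)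
          have hxU : x ∈ U := by rw [hx_def]; exact Submodule.add_mem _ huU hvU
          have hUne : U ≠ ⊥ := by
            intro hbot
            rw [hbot, Submodule.mem_bot] at huU
            exact hu0 huU
          have hmemU' : ∀ y : Fin R.d → k, f y = 0 → g y = 0 → y ∈ U' :=
            fun y h1 h2 => Submodule.mem_inf.mpr ⟨LinearMap.mem_ker.mpr h1, LinearMap.mem_ker.mpr h2⟩
          have hremU' : ∀ y : Fin R.d → k, y - (f y • u + g y • v) ∈ U' := by
            intro y
            refine hmemU' _ ?_ ?_
            · rw [map_sub, map_add, map_smul, map_smul, hfu, hfv, smul_eq_mul, smul_eq_mul,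
                mul_one, mul_zero, add_zero, sub_self]
            · rw [map_sub, map_add, map_smul, map_smul, hgu, hgv, smul_eq_mul, smul_eq_mul,
                mul_one, mul_zero, zero_add, sub_self]
          have hdisj : Disjoint U U' := by
            rw [disjoint_iff_inf_le]
            rintro z ⟨hzU, hzU'⟩
            obtain ⟨hzf, hzg⟩ := Submodule.mem_inf.mp hzU'
            obtain ⟨a, b2, hz⟩ := Submodule.mem_span_pair.mp hzU
            have hfz : f z = a := by
              rw [← hz, map_add, map_smul, map_smul, hfu, hfv, smul_eq_mul, smul_eq_mul,
                mul_one, mul_zero, add_zero]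
            have hgz : g z = b2 := by
              rw [← hz, map_add, map_smul, map_smul, hgu, hgv, smul_eq_mul, smul_eq_mul,
                mul_one, mul_zero, zero_add]
            have ha : a = 0 := by rw [← hfz]; exact LinearMap.mem_ker.mp hzf
            have hb : b2 = 0 := by rw [← hgz]; exact LinearMap.mem_ker.mp hzg
            rw [Submodule.mem_bot, ← hz, ha, hb, zero_smul, zero_smul, add_zero]
          have hcod : Codisjoint U U' := by
            rw [codisjoint_iff_le_sup]
            intro y _
            refine Submodule.mem_sup.mpr ⟨f y • u + g y • v,
              Submodule.mem_span_pair.mpr ⟨f y, g y, rfl⟩,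
              y - (f y • u + g y • v), hremU' y, by abel⟩
          have hcompl : IsCompl U U' := ⟨hdisj, hcod⟩
          -- chain compatibility
          have hmidrem : ∀ (y : Fin R.d → k), y ∈ Fext R (s+1) → y - f y • x ∈ U' := by
            intro y hyP
            refine hmemU' _ ?_ ?_
            · rw [map_sub, map_smul, hfx, smul_eq_mul, mul_one, sub_self]
            · rw [map_sub, map_smul, hgx, smul_eq_mul, mul_one, hgP y hyP, hfP y hyP, sub_self]
          have hccomp : ∀ i : Fin (n-1), R.chain i = (R.chain i ⊓ U) ⊔ (R.chain i ⊓ U') := by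
            intro i
            rcases le_or_gt ((i:ℕ)+1) s with hle | hlt
            · refine compat_left ?_ hcod
              rw [hchainF i, hU_def, span_le, Set.insert_subset_iff, Set.singleton_subset_iff]
              exact ⟨Fext_anti R hle huF, Fext_anti R hle hvF⟩
            · rcases le_or_gt ((i:ℕ)+1) m with hle2 | hlt2
              · refine le_antisymm ?_ (sup_le inf_le_left inf_le_left)
                intro y hy
                have hyc : y ∈ Fext R ((i:ℕ)+1) := by rwa [hchainF i] at hy
                have hyP : y ∈ Fext R (s+1) := Fext_anti R (by omega) hyc
                have hxc : x ∈ Fext R ((i:ℕ)+1) := Fext_anti R (by omega) hxB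
                have hdec : y = f y • x + (y - f y • x) := by abel
                rw [hdec]
                have hin1 : f y • x ∈ R.chain i ⊓ U := Submodule.mem_inf.mpr
                  ⟨by rw [hchainF i]; exact Submodule.smul_mem _ _ hxc, Submodule.smul_mem _ _ hxU⟩
                have hin2 : y - f y • x ∈ R.chain i ⊓ U' := Submodule.mem_inf.mpr
                  ⟨by rw [hchainF i]; exact Submodule.sub_mem _ hyc (Submodule.smul_mem _ _ hxc),
                    hmidrem y hyP⟩
                exact Submodule.add_mem_sup hin1 hin2
              · rw [hchainF i, hgt _ hlt2]
                simp
          have hlcomp : R.left = (R.left ⊓ U) ⊔ (R.left ⊓ U') := by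
            refine le_antisymm ?_ (sup_le inf_le_left inf_le_left)
            intro y hy
            have hrem : y - f y • u ∈ R.left ⊓ U' := Submodule.mem_inf.mpr
              ⟨Submodule.sub_mem _ hy (Submodule.smul_mem _ _ huL), hmemU' _
                (by rw [map_sub, map_smul, hfu, smul_eq_mul, mul_one, sub_self])
                (by rw [map_sub, map_smul, hgu, smul_eq_mul, mul_zero, hgL y hy, sub_self])⟩
            have hdec : y = f y • u + (y - f y • u) := by abel
            rw [hdec]
            exact Submodule.add_mem_sup (Submodule.mem_inf.mpr
              ⟨Submodule.smul_mem _ _ huL, Submodule.smul_mem _ _ huU⟩) hrem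
          have hrcomp : R.right = (R.right ⊓ U) ⊔ (R.right ⊓ U') := by
            refine le_antisymm ?_ (sup_le inf_le_left inf_le_left)
            intro y hy
            have hrem : y - g y • v ∈ R.right ⊓ U' := Submodule.mem_inf.mpr
              ⟨Submodule.sub_mem _ hy (Submodule.smul_mem _ _ hvR), hmemU' _
                (by rw [map_sub, map_smul, hfv, smul_eq_mul, mul_zero, hfR y hy, sub_self])
                (by rw [map_sub, map_smul, hgv, smul_eq_mul, mul_one, sub_self])⟩
            have hdec : y = g y • v + (y - g y • v) := by abel
            rw [hdec]
            exact Submodule.add_mem_sup (Submodule.mem_inf.mpr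
              ⟨Submodule.smul_mem _ _ hvR, Submodule.smul_mem _ _ hvU⟩) hrem
          obtain ⟨hTop, hBot⟩ := endg U U' hUne hcompl hccomp hlcomp hrcomp
          have hdual : ∀ y, y = f y • u + g y • v := by
            intro y
            have hz := hremU' y
            rw [hBot, Submodule.mem_bot, sub_eq_zero] at hz
            exact hz
          have hleftpat : R.left = span k {u} := by
            refine le_antisymm ?_ (by rw [span_le, Set.singleton_subset_iff]; exact huL)
            intro y hy
            have hz : y - f y • u ∈ U' := hmemU' _
              (by rw [map_sub, map_smul, hfu, smul_eq_mul, mul_one, sub_self])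
              (by rw [map_sub, map_smul, hgu, smul_eq_mul, mul_zero, hgL y hy, sub_self])
            rw [hBot, Submodule.mem_bot, sub_eq_zero] at hz
            rw [hz]
            exact Submodule.smul_mem _ _ (Submodule.mem_span_singleton_self u)
          have hrightpat : R.right = span k {v} := by
            refine le_antisymm ?_ (by rw [span_le, Set.singleton_subset_iff]; exact hvR)
            intro y hy
            have hz : y - g y • v ∈ U' := hmemU' _
              (by rw [map_sub, map_smul, hfv, smul_eq_mul, mul_zero, hfR y hy, sub_self])
              (by rw [map_sub, map_smul, hgv, smul_eq_mul, mul_one, sub_self])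
            rw [hBot, Submodule.mem_bot, sub_eq_zero] at hz
            rw [hz]
            exact Submodule.smul_mem _ _ (Submodule.mem_span_singleton_self v)
          have hsn : s < n := by omega
          have hchainpat : ∀ i : Fin (n-1), R.chain i =
              (if (i:ℕ) < ((⟨s, hsn⟩ : Fin n):ℕ) then ⊤
                else if (i:ℕ) < ((⟨m, hmn⟩ : Fin n):ℕ) then span k {u + v} else ⊥) := by
            intro i
            show R.chain i = (if (i:ℕ) < s then ⊤ else if (i:ℕ) < m then span k {u+v} else ⊥)
            rcases lt_or_ge ((i:ℕ)) s with hlt | hge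
            · rw [if_pos hlt, eq_top_iff, ← hTop, hU_def, span_le, Set.insert_subset_iff,
                Set.singleton_subset_iff, hchainF i]
              exact ⟨Fext_anti R (by omega) huF, Fext_anti R (by omega) hvF⟩
            · rw [if_neg (by omega)]
              rcases lt_or_ge ((i:ℕ)) m with hlt2 | hge2
              · rw [if_pos hlt2]
                refine le_antisymm ?_ ?_
                · intro y hy
                  have hyc : y ∈ Fext R ((i:ℕ)+1) := by rwa [hchainF i] at hy
                  have hyP : y ∈ Fext R (s+1) := Fext_anti R (by omega) hyc
                  have hz : y - f y • x ∈ U' := hmidrem y hyP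
                  rw [hBot, Submodule.mem_bot, sub_eq_zero] at hz
                  rw [hz]
                  exact Submodule.smul_mem _ _ (Submodule.mem_span_singleton_self x)
                · rw [span_le, Set.singleton_subset_iff, hchainF i]
                  exact Fext_anti R (by omega) hxB
              · rw [if_neg (by omega), hchainF i]
                exact hgt _ (by omega)
          exact ⟨Sum.inr ⟨(⟨s, hsn⟩, ⟨m, hmn⟩), Fin.mk_lt_mk.mpr hsm⟩,
            iso2 u v f g hfu hfv hgu hgv hdual ⟨s, hsn⟩ ⟨m, hmn⟩ hsm hchainpat hleftpat hrightpat⟩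

        · -- case C1 : B meets nothing
          push_neg at hC
          obtain ⟨x, hxB, hx0⟩ := (Submodule.ne_bot_iff _).mp hmB
          have hdisj : Disjoint (span k {x}) (R.left ⊔ R.right) := by
            rw [disjoint_iff_inf_le]
            rintro z ⟨hz1, hz2⟩
            obtain ⟨c, rfl⟩ := mem_span_singleton.mp hz1
            rcases eq_or_ne c 0 with rfl | hc
            · simp
            · exfalso
              have hxLR : x ∈ R.left ⊔ R.right := by
                simpa [smul_smul, inv_mul_cancel₀ hc] using (R.left ⊔ R.right).smul_mem c⁻¹ hz2
              have : x ∈ Fext R m ⊓ (R.left ⊔ R.right) := Submodule.mem_inf.mpr ⟨hxB, hxLR⟩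
              rw [hC, Submodule.mem_bot] at this
              exact hx0 this
          obtain ⟨U', hLRU', hcompl⟩ := exists_isCompl_ge hdisj
          have hspx : span k {x} ≠ ⊥ := fun h => hx0 (span_singleton_eq_bot.mp h)
          obtain ⟨hTop, hBot⟩ := endg _ _ hspx hcompl (chaincompat x hxB U' hcompl.codisjoint)
            (compat_right (le_trans le_sup_left hLRU')) (compat_right (le_trans le_sup_right hLRU'))
          refine ⟨Sum.inl (⟨m, hmn⟩, false, false),
            iso1 x hx0 hTop _ _ _ (chainpat x hxB hTop) ?_ ?_⟩
          · rw [if_neg (by simp), ← le_bot_iff, ← hBot]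
            exact le_trans le_sup_left hLRU'
          · rw [if_neg (by simp), ← le_bot_iff, ← hBot]
            exact le_trans le_sup_right hLRU'

end Classification


/-- The number of isomorphism classes of indecomposable representations of
`𝒫_n` equals `(1/2)n² + (7/2)n`; equivalently `(n²+3n+2) − (n²−n)/2 − 2`. -/
theorem count_indecomposable_poset_reps
    (k : Type) [Field k] (n : ℕ) (hn : 1 ≤ n) :
    Nat.card (Quot (fun R S : {R : PosetRep k n // R.Indec} => R.1.Iso S.1))
        = (n ^ 2 + 3 * n + 2) - (n ^ 2 - n) / 2 - 2 ∧
    2 * Nat.card (Quot (fun R S : {R : PosetRep k n // R.Indec} => R.1.Iso S.1))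
        = n ^ 2 + 7 * n := by
  classical
  set rel : {R : PosetRep k n // R.Indec} → {R : PosetRep k n // R.Indec} → Prop :=
    fun R S => R.1.Iso S.1 with hrel
  set ψ : PIndex n → Quot rel :=
    fun i => Quot.mk rel ⟨pmodel k n i, pmodel_indec k n i⟩ with hψ
  have hsurj : Function.Surjective ψ := by
    intro q
    induction q using Quot.ind with
    | _ a =>
      obtain ⟨R, hR⟩ := a
      obtain ⟨i, hiso⟩ := classify hn R hR
      exact ⟨i, Quot.sound hiso⟩
  have hinj : Function.Injective ψ := by
    intro i j hij
    have hgen := Quot.eqvGen_exact hij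
    have key : ∀ a b : {R : PosetRep k n // R.Indec}, Relation.EqvGen rel a b → a.1.Iso b.1 := by
      intro a b hab
      induction hab with
      | rel x y hxy => exact hxy
      | refl x => exact PosetRep.Iso.refl _
      | symm x y _ ih => exact PosetRep.Iso.symm ih
      | trans x y z _ _ ih1 ih2 => exact PosetRep.Iso.trans ih1 ih2
    exact pmodel_inj k n i j (key _ _ hgen)
  have hcard : Nat.card (Quot rel) = Nat.card (PIndex n) :=
    (Nat.card_eq_of_bijective ψ ⟨hinj, hsurj⟩).symm
  have h1 : Nat.card (PIndex n) = Fintype.card (PIndex n) := Nat.card_eq_fintype_card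
  have h2 : Fintype.card (PIndex n)
      = 4 * n + Fintype.card {p : Fin n × Fin n // p.1 < p.2} := by
    show Fintype.card ((Fin n × Bool × Bool) ⊕ {p : Fin n × Fin n // p.1 < p.2}) = _
    rw [Fintype.card_sum, Fintype.card_prod, Fintype.card_prod, Fintype.card_bool,
      Fintype.card_fin]
    ring_nf
  have h3 : 2 * Fintype.card {p : Fin n × Fin n // p.1 < p.2} = n * (n - 1) := card_lt n
  obtain ⟨m, rfl⟩ : ∃ m, n = m + 1 := ⟨n - 1, by omega⟩
  set c2 := Fintype.card {p : Fin (m+1) × Fin (m+1) // p.1 < p.2} with hc2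
  set q := m * m with hq
  have h4 : (m+1) * ((m+1) - 1) = q + m := by simp [hq]; ring
  have h5 : (m+1) ^ 2 = q + 2 * m + 1 := by rw [hq]; ring
  have hK : Nat.card (Quot rel) = 4 * (m + 1) + c2 := by rw [hcard, h1, h2]
  rw [hK, h5]
  rw [h4] at h3
  omega
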